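/- Let K be a field of characteristic zero and let ∂_1,…,∂_n denote the formal partial derivatives on K[[x_1,…,x_n]]. Let m ∈ ℤ_{≥0} and for each 1 ≤ i ≤ n let D_i = Σ_{j=0}^{m} c_{ij} ∂_i^j be a nonzero differential operator with coefficients c_{ij} ∈ K. Then for every f ∈ K[[x_1,…,x_n]], if D_1 f = … = D_n f = 0 and the coefficient of x^k in f vanishes for every k ∈ {0,1,…,m}^n, then f = 0. -/

import Mathlib

/-- The formal partial derivative `∂_i` on `K⟦x_1, …, x_n⟧`:
the coefficient of `x^k` in `∂_i f` is `(k_i + 1)` times the coefficient of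
`x^{k + 1_i}` in `f`. -/
noncomputable def mvPDeriv {K : Type*} [Field K] {n : ℕ} (i : Fin n)
    (f : MvPowerSeries (Fin n) K) : MvPowerSeries (Fin n) K :=
  fun k => ((k i : K) + 1) * MvPowerSeries.coeff (k + Finsupp.single i 1) f

lemma mvPDeriv_iter_coeff {K : Type*} [Field K] {n : ℕ} (i : Fin n)
    (f : MvPowerSeries (Fin n) K) :
    ∀ (j : ℕ) (k : Fin n →₀ ℕ),
      MvPowerSeries.coeff k ((mvPDeriv i)^[j] f)
        = (∏ t ∈ Finset.range j, (((k i : K) + t + 1))) *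
            MvPowerSeries.coeff (k + Finsupp.single i j) f := by
  intro j
  induction j with
  | zero => intro k; simp
  | succ j ih =>
    intro k
    rw [Function.iterate_succ_apply']
    have h1 : MvPowerSeries.coeff k (mvPDeriv i ((mvPDeriv i)^[j] f))
        = ((k i : K) + 1) *
            MvPowerSeries.coeff (k + Finsupp.single i 1) ((mvPDeriv i)^[j] f) := rfl
    rw [h1, ih (k + Finsupp.single i 1)]
    have e1 := Finsupp.add_apply k (Finsupp.single i 1) i
    simp only [Finsupp.single_eq_same] at e1
    have e2 : k + Finsupp.single i 1 + Finsupp.single i j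
        = k + Finsupp.single i (j + 1) := by
      rw [add_assoc, ← Finsupp.single_add, add_comm 1 j]
    rw [e1, e2, Finset.prod_range_succ']
    have e4 : (∏ t ∈ Finset.range j, (((k i + 1 : ℕ) : K) + t + 1))
        = ∏ t ∈ Finset.range j, ((k i : K) + ((t + 1 : ℕ) : K) + 1) :=
      Finset.prod_congr rfl fun t _ => by push_cast; ring
    rw [e4]
    push_cast
    ring

/-- **Multivariate analogue of the truncation lemma.**
Let `K` be a field of characteristic zero, and for each `1 ≤ i ≤ n` let
`D_i = Σ_{j=0}^m c_{ij} ∂_i^j` be a nonzero differential operator with constant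
coefficients.  If `D_1 f = ⋯ = D_n f = 0` and all coefficients of `f` on the box
`{0, …, m}^n` vanish, then `f = 0`. -/
theorem mv_powerSeries_pde_trunc_zero
    {K : Type*} [Field K] [CharZero K] {n m : ℕ}
    (c : Fin n → ℕ → K)
    (hc : ∀ i, ∃ j ≤ m, c i j ≠ 0)
    (f : MvPowerSeries (Fin n) K)
    (hD : ∀ i, ∑ j ∈ Finset.range (m + 1), c i j • (mvPDeriv i)^[j] f = 0)
    (htrunc : ∀ k : Fin n →₀ ℕ, (∀ i, k i ≤ m) → MvPowerSeries.coeff k f = 0) :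
    f = 0 := by
  classical
  have key : ∀ (i : Fin n) (k : Fin n →₀ ℕ),
      ∑ j ∈ Finset.range (m + 1),
        c i j * ((∏ t ∈ Finset.range j, (((k i : K) + t + 1))) *
          MvPowerSeries.coeff (k + Finsupp.single i j) f) = 0 := by
    intro i k
    have h := congrArg (MvPowerSeries.coeff k) (hD i)
    rw [map_sum, map_zero] at h
    rw [← h]
    refine Finset.sum_congr rfl fun j _ => ?_
    rw [map_smul, smul_eq_mul, mvPDeriv_iter_coeff]
  have main : ∀ N, ∀ k : Fin n →₀ ℕ, (∑ i, (k i - m)) ≤ N →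
      MvPowerSeries.coeff k f = 0 := by
    intro N
    induction N with
    | zero =>
      intro k hk
      refine htrunc k fun i => ?_
      have : k i - m = 0 := by
        have := Finset.sum_le_sum_of_subset (Finset.subset_univ {i})
          (f := fun i' => k i' - m)
        simp at this
        omega
      omega
    | succ N ih =>
      intro k hk
      by_cases h0 : ∀ i, k i ≤ m
      · exact htrunc k h0
      push_neg at h0
      obtain ⟨i, hi⟩ := h0
      set S := (Finset.range (m + 1)).filter (fun j => c i j ≠ 0) with hSdef
      have hS : S.Nonempty := by
        obtain ⟨j, hj, hcj⟩ := hc i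
        exact ⟨j, by simp [hSdef, Nat.lt_succ_iff, hj, hcj]⟩
      set j₀ := S.max' hS with hj₀def
      have hj₀S : j₀ ∈ S := S.max'_mem hS
      have hj₀m : j₀ ≤ m := by
        have := (Finset.mem_filter.mp hj₀S).1
        simpa [Nat.lt_succ_iff] using this
      have hcj₀ : c i j₀ ≠ 0 := (Finset.mem_filter.mp hj₀S).2
      have hmax : ∀ j, j₀ < j → j ≤ m → c i j = 0 := by
        intro j hlt hjm
        by_contra hne
        have : j ∈ S := by simp [hSdef, Nat.lt_succ_iff, hjm, hne]
        exact absurd (S.le_max' j this) (by omega)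
      set k' := k - Finsupp.single i j₀ with hk'def
      have hki : j₀ ≤ k i := by omega
      have hk'app : ∀ i', k' i' = k i' - (Finsupp.single i j₀) i' := by
        intro i'; simp [hk'def, Finsupp.tsub_apply]
      have hkk : k' + Finsupp.single i j₀ = k := by
        ext i'
        rw [Finsupp.add_apply, hk'app i']
        rcases eq_or_ne i' i with rfl | hne
        · simp [Finsupp.single_apply]; omega
        · simp [Finsupp.single_apply, hne.symm, Ne.symm hne]
      -- each shifted index with j < j₀ has smaller measure
      have hsmall : ∀ j < j₀, MvPowerSeries.coeff (k' + Finsupp.single i j) f = 0 := by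
        intro j hj
        apply ih
        have hlt : (∑ i', ((k' + Finsupp.single i j) i' - m)) < ∑ i', (k i' - m) := by
          apply Finset.sum_lt_sum
          · intro i' _
            rw [Finsupp.add_apply, hk'app i']
            rcases eq_or_ne i' i with rfl | hne
            · simp [Finsupp.single_apply]; omega
            · simp [Finsupp.single_apply, Ne.symm hne]
          · refine ⟨i, Finset.mem_univ i, ?_⟩
            rw [Finsupp.add_apply, hk'app i]
            simp [Finsupp.single_apply]
            omega
        omega
      have hrec := key i k'
      rw [Finset.sum_eq_single j₀] at hrec
      · rw [hkk] at hrec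
        have hP : (∏ t ∈ Finset.range j₀, (((k' i : K) + t + 1))) ≠ 0 := by
          apply Finset.prod_ne_zero_iff.mpr
          intro t _
          have : (((k' i + t + 1 : ℕ) : K)) ≠ 0 := Nat.cast_ne_zero.mpr (by omega)
          push_cast at this
          exact this
        have := mul_eq_zero.mp hrec
        rcases this with h | h
        · exact absurd h hcj₀
        · rcases mul_eq_zero.mp h with h | h
          · exact absurd h hP
          · exact h
      · intro j hjmem hne
        rcases lt_or_gt_of_ne hne with hlt | hgt
        · rw [hsmall j hlt]; ring
        · rw [hmax j hgt (by simpa [Nat.lt_succ_iff] using hjmem)]; ring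
      · intro habs
        exact absurd (Finset.mem_range.mpr (by omega)) habs
  exact MvPowerSeries.ext fun k => by
    rw [map_zero]; exact main (∑ i, (k i - m)) k le_rfl
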